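/- Let G₀ be defined near a smooth curve Σ₀ ⊂ ℝ² by G₀(x) = g(π(x)) + v(π(x))·(x - π(x)) + A(π(x))·d(x)², where π is the nearest-point projection to Σ₀, d is the distance to Σ₀, g, v satisfy the separation condition g(p̃) - g(p) - v(p)·(p̃-p) ≥ γ|p̃-p|² on Σ₀, and A is a smooth positive function. Then G₀ = g and ∇G₀ = v on Σ₀, and for A sufficiently large (pointwise, depending on γ, g, v and the curvature of Σ₀) one has D²G₀ ≥ (3γ/2)I on Σ₀. -/

import Mathlib

open scoped RealInnerProductSpace

/-- second derivative of `f` at `x` as a quadratic form evaluated at `w`. -/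
noncomputable def D2r (f : EuclideanSpace ℝ (Fin 2) → ℝ)
    (x w : EuclideanSpace ℝ (Fin 2)) : ℝ :=
  fderiv ℝ (fun y => fderiv ℝ f y w) x w

private abbrev E2' := EuclideanSpace ℝ (Fin 2)

private lemma two_le_inf : (2:WithTop ℕ∞) ≤ ((⊤:ℕ∞):WithTop ℕ∞) :=
  le_trans (WithTop.coe_le_coe.mpr le_top) (le_of_eq rfl)

private lemma one_le_inf : ((⊤:ℕ∞):WithTop ℕ∞) ≠ 0 := by
  simp

private lemma evdiff {f : E2' → ℝ} {p : E2'} (hf : ContDiffAt ℝ 2 f p) :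
    ∀ᶠ y in nhds p, DifferentiableAt ℝ f y :=
  (hf.eventually (by norm_num)).mono fun y hy => hy.differentiableAt (by norm_num)

private lemma difffd {f : E2' → ℝ} {p : E2'} (hf : ContDiffAt ℝ 2 f p) (w : E2') :
    DifferentiableAt ℝ (fun y => fderiv ℝ f y w) p :=
  (((hf.fderiv_right (m := 1) (by norm_num)).clm_apply
    contDiffAt_const).differentiableAt (by norm_num))

private lemma d2r_add {f g : E2' → ℝ} {p : E2'} (hf : ContDiffAt ℝ 2 f p)
    (hg : ContDiffAt ℝ 2 g p)
    (w : E2') : D2r (fun x => f x + g x) p w = D2r f p w + D2r g p w := by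
  have he : (fun y => fderiv ℝ (fun x => f x + g x) y w) =ᶠ[nhds p]
      (fun y => fderiv ℝ f y w + fderiv ℝ g y w) := by
    filter_upwards [evdiff hf, evdiff hg] with y h1 h2
    rw [fderiv_fun_add h1 h2]; rfl
  rw [D2r, he.fderiv_eq, fderiv_fun_add (difffd hf w) (difffd hg w)]; rfl

private lemma d2r_const_mul {f : E2' → ℝ} {p : E2'} (hf : ContDiffAt ℝ 2 f p) (c : ℝ)
    (w : E2') : D2r (fun x => c * f x) p w = c * D2r f p w := by
  have he : (fun y => fderiv ℝ (fun x => c * f x) y w) =ᶠ[nhds p]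
      (fun y => c * fderiv ℝ f y w) := by
    filter_upwards [evdiff hf] with y h1
    rw [fderiv_const_mul h1]; rfl
  rw [D2r, he.fderiv_eq, fderiv_const_mul (difffd hf w)]; rfl

private lemma d2r_const (c : ℝ) (p w : E2') : D2r (fun _ => c) p w = 0 := by
  have he : (fun y : E2' => fderiv ℝ (fun _ : E2' => c) y w) =ᶠ[nhds p] (fun _ => (0:ℝ)) := by
    filter_upwards with y; rw [fderiv_fun_const]; rfl
  rw [D2r, he.fderiv_eq, fderiv_fun_const]; rfl

private lemma d2r_mul {f g : E2' → ℝ} {p : E2'} (hf : ContDiffAt ℝ 2 f p)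
    (hg : ContDiffAt ℝ 2 g p)
    (w : E2') : D2r (fun x => f x * g x) p w =
      D2r f p w * g p + 2 * (fderiv ℝ f p w * fderiv ℝ g p w) + f p * D2r g p w := by
  have he : (fun y => fderiv ℝ (fun x => f x * g x) y w) =ᶠ[nhds p]
      (fun y => fderiv ℝ f y w * g y + f y * fderiv ℝ g y w) := by
    filter_upwards [evdiff hf, evdiff hg] with y h1 h2
    rw [fderiv_fun_mul h1 h2]
    simp [ContinuousLinearMap.smul_apply]
    ring
  rw [D2r, he.fderiv_eq]
  have d1 := difffd hf w
  have d2 := difffd hg w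
  have df : DifferentiableAt ℝ f p := hf.differentiableAt (by norm_num)
  have dg : DifferentiableAt ℝ g p := hg.differentiableAt (by norm_num)
  rw [fderiv_fun_add (d1.fun_mul dg) (df.fun_mul d2)]
  rw [ContinuousLinearMap.add_apply, fderiv_fun_mul d1 dg, fderiv_fun_mul df d2]
  simp only [ContinuousLinearMap.add_apply, ContinuousLinearMap.smul_apply, smul_eq_mul]
  unfold D2r
  ring

private lemma d2r_nonneg {f : E2' → ℝ} {p : E2'} (hf : ContDiffAt ℝ 2 f p)
    (hmin : ∀ᶠ y in nhds p, f p ≤ f y) (w : E2') : 0 ≤ D2r f p w := by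
  by_contra hc
  push_neg at hc
  set c : ℝ := D2r f p w with hcdef
  set ℓ : ℝ → E2' := fun t => p + t • w with hℓ
  have hℓ0 : ℓ 0 = p := by simp [hℓ]
  have hℓd : ∀ t : ℝ, HasDerivAt ℓ w t := by
    intro t
    simpa [hℓ] using ((hasDerivAt_id t).smul_const w).const_add p
  have hℓc : Continuous ℓ := by continuity
  set φ : ℝ → ℝ := fun t => f (ℓ t) with hφ
  set ψ : ℝ → ℝ := fun t => fderiv ℝ f (ℓ t) w with hψ
  have hDf1 : DifferentiableAt ℝ (fun y => fderiv ℝ f y w) p := difffd hf w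
  have hψd : HasDerivAt ψ c 0 := by
    have h0 := hDf1.hasFDerivAt
    rw [← hℓ0] at h0
    have h2 := h0.comp_hasDerivAt 0 (hℓd 0)
    rw [hℓ0] at h2
    exact h2
  have hminφ : ∀ᶠ t in nhds 0, φ 0 ≤ φ t := by
    have : Filter.Tendsto ℓ (nhds 0) (nhds p) := by
      rw [← hℓ0]; exact hℓc.continuousAt
    filter_upwards [this.eventually hmin] with t ht
    simpa [φ, hℓ0] using ht
  have hev : ∀ᶠ t in nhds (0:ℝ), DifferentiableAt ℝ f (ℓ t) := by
    have : Filter.Tendsto ℓ (nhds 0) (nhds p) := by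
      rw [← hℓ0]; exact hℓc.continuousAt
    exact this.eventually (evdiff hf)
  have hφderiv : ∀ᶠ t in nhds (0:ℝ), HasDerivAt φ (ψ t) t := by
    filter_upwards [hev] with t ht
    exact ht.hasFDerivAt.comp_hasDerivAt t (hℓd t)
  have hψ0 : ψ 0 = 0 := by
    have h1 : deriv φ 0 = 0 := IsLocalMin.deriv_eq_zero (f := φ) hminφ
    have h2 : HasDerivAt φ (ψ 0) 0 := hφderiv.self_of_nhds
    rw [← h2.deriv, h1]
  have hslope : ∀ᶠ t in nhdsWithin (0:ℝ) (Set.Ioi 0), ψ t < 0 := by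
    have := hasDerivAt_iff_tendsto_slope.mp hψd
    have h2 : Filter.Tendsto (slope ψ 0) (nhdsWithin 0 (Set.Ioi 0)) (nhds c) :=
      this.mono_left (nhdsWithin_mono _ (by intro x hx; simpa using ne_of_gt hx))
    have h3 : ∀ᶠ t in nhdsWithin (0:ℝ) (Set.Ioi 0), slope ψ 0 t < 0 :=
      h2.eventually_lt_const hc
    filter_upwards [h3, self_mem_nhdsWithin] with t ht (ht0 : t ∈ Set.Ioi 0)
    have heq : slope ψ 0 t = ψ t / t := by
      simp [slope, hψ0, div_eq_inv_mul]
    rw [heq] at ht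
    simp only [Set.mem_Ioi] at ht0
    rcases div_neg_iff.mp ht with h | h
    · linarith [h.2]
    · exact h.1
  rw [eventually_nhdsWithin_iff] at hslope
  obtain ⟨ε, hε, hball⟩ := Metric.eventually_nhds_iff_ball.mp (hφderiv.and (hminφ.and hslope))
  set δ : ℝ := ε / 2 with hδ
  have hδpos : 0 < δ := by positivity
  have hmem : ∀ t ∈ Set.Icc (0:ℝ) δ, t ∈ Metric.ball (0:ℝ) ε := by
    intro t ht
    rw [Metric.mem_ball, Real.dist_eq, sub_zero, abs_of_nonneg ht.1]
    linarith [ht.2]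
  have hcont : ContinuousOn φ (Set.Icc 0 δ) := fun t ht =>
    ((hball t (hmem t ht)).1.differentiableAt.continuousAt).continuousWithinAt
  have hdiff : DifferentiableOn ℝ φ (Set.Ioo 0 δ) := fun t ht =>
    ((hball t (hmem t (Set.Ioo_subset_Icc_self ht))).1.differentiableAt).differentiableWithinAt
  obtain ⟨ξ, hξ, hderiv⟩ := exists_deriv_eq_slope φ hδpos hcont hdiff
  have hξball := hball ξ (hmem ξ (Set.Ioo_subset_Icc_self hξ))
  have h1 : deriv φ ξ = ψ ξ := hξball.1.deriv
  have h2 : ψ ξ < 0 := hξball.2.2 hξ.1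
  have h3 : φ 0 ≤ φ δ := (hball δ (hmem δ (Set.right_mem_Icc.mpr hδpos.le))).2.1
  rw [h1] at hderiv
  have : 0 ≤ ψ ξ := by
    rw [hderiv]
    apply div_nonneg (by linarith) (by linarith)
  linarith

private lemma abs_coord_le (u : E2') (i : Fin 2) : |u i| ≤ ‖u‖ := by
  rw [EuclideanSpace.norm_eq]
  rw [show |u i| = Real.sqrt (‖u i‖^2) by rw [Real.sqrt_sq_eq_abs]; simp]
  apply Real.sqrt_le_sqrt
  exact Finset.single_le_sum (f := fun j => ‖u j‖^2) (fun j _ => by positivity) (Finset.mem_univ i)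

private lemma clm_bound (T : E2' →L[ℝ] E2') (u : E2') :
    ‖T u‖ ≤ (1 + ‖T (EuclideanSpace.single 0 1)‖^2 + ‖T (EuclideanSpace.single 1 1)‖^2) * ‖u‖ := by
  have hdec : u = u 0 • EuclideanSpace.single 0 1 + u 1 • EuclideanSpace.single 1 1 := by
    ext i
    fin_cases i <;> simp [EuclideanSpace.single_apply]
  set a := ‖T (EuclideanSpace.single (0:Fin 2) (1:ℝ))‖ with ha
  set b := ‖T (EuclideanSpace.single (1:Fin 2) (1:ℝ))‖ with hb
  have h1 : ‖T u‖ ≤ |u 0| * a + |u 1| * b := by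
    conv_lhs => rw [hdec]
    rw [map_add, map_smul, map_smul]
    refine le_trans (norm_add_le _ _) ?_
    rw [norm_smul, norm_smul, Real.norm_eq_abs, Real.norm_eq_abs]
  have h2 : |u 0| ≤ ‖u‖ := abs_coord_le u 0
  have h3 : |u 1| ≤ ‖u‖ := abs_coord_le u 1
  have ha0 : 0 ≤ a := norm_nonneg _
  have hb0 : 0 ≤ b := norm_nonneg _
  have habs0 : 0 ≤ |u 0| := abs_nonneg _
  have habs1 : 0 ≤ |u 1| := abs_nonneg _
  nlinarith [sq_nonneg (a - 1), sq_nonneg (b - 1), norm_nonneg u]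

private lemma quadbound (γ a b m Ap W iv : ℝ) (hγ : 0 < γ) (ha : 0 ≤ a) (hb : 0 ≤ b)
    (hm : 1 ≤ m) (hW : 0 ≤ W) (hWle : W ≤ a + b)
    (hiv : -(m * a * b) ≤ iv)
    (hAp : Ap * (4*γ) = (2*m+3*γ)^2 + 3*γ^2 + 4*γ) :
    3 * γ / 2 * W^2 ≤ 2*γ*a^2 + 2*iv + Ap*(2*b^2) := by
  have hW2 : W^2 ≤ (a+b)^2 := by nlinarith
  nlinarith [sq_nonneg (γ*a - (2*m+3*γ)*b), sq_nonneg b, mul_pos hγ hγ,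
    mul_le_mul_of_nonneg_left hW2 (le_of_lt hγ)]

/-- Local extension lemma: with `G₀(x) = g(π(x)) + v(π(x))·(x - π(x)) + A(π(x))d(x)²`,
one has `G₀ = g`, `∇G₀ = v` on `Σ₀`, and `D²G₀ ≥ (3γ/2)I` on `Σ₀` for a suitable smooth
positive `A`. -/
theorem stmt15 (S U : Set (EuclideanSpace ℝ (Fin 2))) (hU : IsOpen U) (hSU : S ⊆ U)
    (proj nu : EuclideanSpace ℝ (Fin 2) → EuclideanSpace ℝ (Fin 2))
    (g : EuclideanSpace ℝ (Fin 2) → ℝ)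
    (v : EuclideanSpace ℝ (Fin 2) → EuclideanSpace ℝ (Fin 2))
    (γ : ℝ) (hγ : 0 < γ)
    (hproj : ContDiffOn ℝ (⊤ : ℕ∞) proj U) (hprojmem : ∀ x ∈ U, proj x ∈ S)
    (hprojid : ∀ p ∈ S, proj p = p)
    (hdist : ∀ x ∈ U, ‖x - proj x‖ = Metric.infDist x S)
    (hnu : ∀ p ∈ S, ‖nu p‖ = 1)
    (hhess : ∀ p ∈ S, ∀ w, D2r (fun z => ‖z - proj z‖ ^ 2 / 2) p w =
      (inner ℝ w (nu p) : ℝ) ^ 2)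
    (hg : ContDiffOn ℝ (⊤ : ℕ∞) g U) (hv : ContDiffOn ℝ (⊤ : ℕ∞) v U)
    (hsep : ∀ p ∈ S, ∀ q ∈ S, g q - g p - (inner ℝ (v p) (q - p) : ℝ) ≥ γ * ‖q - p‖ ^ 2)
    (htan : ∀ p ∈ S, ∀ w, fderiv ℝ (fun x => g (proj x)) p w =
      (inner ℝ (v p) (fderiv ℝ proj p w) : ℝ)) :
    ∃ A : EuclideanSpace ℝ (Fin 2) → ℝ, ContDiffOn ℝ (⊤ : ℕ∞) A U ∧ (∀ x ∈ U, 0 < A x) ∧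
      ∀ p ∈ S,
        (g (proj p) + (inner ℝ (v (proj p)) (p - proj p) : ℝ) +
            A (proj p) * ‖p - proj p‖ ^ 2 = g p) ∧
        (∀ w, fderiv ℝ (fun x => g (proj x) + (inner ℝ (v (proj x)) (x - proj x) : ℝ) +
            A (proj x) * ‖x - proj x‖ ^ 2) p w = (inner ℝ (v p) w : ℝ)) ∧
        (∀ w, 3 * γ / 2 * ‖w‖ ^ 2 ≤
          D2r (fun x => g (proj x) + (inner ℝ (v (proj x)) (x - proj x) : ℝ) +
            A (proj x) * ‖x - proj x‖ ^ 2) p w) := by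
  classical
  set M : E2' → ℝ := fun x => 1 + ‖fderiv ℝ v x (EuclideanSpace.single 0 1)‖^2
      + ‖fderiv ℝ v x (EuclideanSpace.single 1 1)‖^2 with hMdef
  set A : E2' → ℝ := fun x => (2 * M x + 3 * γ)^2 / (4*γ) + 3*γ/4 + 1 with hAdef
  have hdv : ContDiffOn ℝ ((⊤:ℕ∞)) (fderiv ℝ v) U := hv.fderiv_of_isOpen hU (le_of_eq rfl)
  have hMC : ContDiffOn ℝ ((⊤:ℕ∞)) M U :=
    (contDiffOn_const.add ((hdv.clm_apply contDiffOn_const).norm_sq ℝ)).add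
      ((hdv.clm_apply contDiffOn_const).norm_sq ℝ)
  have hAC : ContDiffOn ℝ ((⊤:ℕ∞)) A U :=
    (((((contDiffOn_const.mul hMC).add contDiffOn_const).pow 2).div_const _).add
      contDiffOn_const).add contDiffOn_const
  have hM1 : ∀ x, 1 ≤ M x := by
    intro x
    have h1 := sq_nonneg ‖fderiv ℝ v x (EuclideanSpace.single (0:Fin 2) (1:ℝ))‖
    have h2 := sq_nonneg ‖fderiv ℝ v x (EuclideanSpace.single (1:Fin 2) (1:ℝ))‖
    simp only [hMdef]
    linarith
  have hApos : ∀ x ∈ U, 0 < A x := by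
    intro x _
    have h1 : 0 ≤ (2 * M x + 3 * γ)^2 / (4*γ) := div_nonneg (sq_nonneg _) (by linarith)
    simp only [hAdef]
    linarith
  refine ⟨A, hAC, hApos, ?_⟩
  intro p hp
  have hpU : p ∈ U := hSU hp
  have hpp : proj p = p := hprojid p hp
  have hUnhds : U ∈ nhds p := hU.mem_nhds hpU
  -- basic smoothness facts
  have hprojsub : ContDiffOn ℝ ((⊤:ℕ∞)) (fun x => x - proj x) U := contDiffOn_id.sub hproj
  have hmapsto : Set.MapsTo proj U U := fun x hx => hSU (hprojmem x hx)
  have hgpC : ContDiffOn ℝ ((⊤:ℕ∞)) (fun x => g (proj x)) U := hg.comp hproj hmapsto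
  have hvpC : ContDiffOn ℝ ((⊤:ℕ∞)) (fun x => v (proj x)) U := hv.comp hproj hmapsto
  have hApC : ContDiffOn ℝ ((⊤:ℕ∞)) (fun x => A (proj x)) U := hAC.comp hproj hmapsto
  have hF2C : ContDiffOn ℝ ((⊤:ℕ∞)) (fun x => (inner ℝ (v (proj x)) (x - proj x) : ℝ)) U :=
    hvpC.inner ℝ hprojsub
  have hnsqC : ContDiffOn ℝ ((⊤:ℕ∞)) (fun x => ‖x - proj x‖^2) U := hprojsub.norm_sq ℝ
  have hF3C : ContDiffOn ℝ ((⊤:ℕ∞)) (fun x => A (proj x) * ‖x - proj x‖^2) U := hApC.mul hnsqC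
  have C2 : ∀ {f : E2' → ℝ}, ContDiffOn ℝ ((⊤:ℕ∞)) f U → ContDiffAt ℝ 2 f p :=
    fun h => (h.contDiffAt hUnhds).of_le two_le_inf
  have dproj : ∀ y ∈ U, DifferentiableAt ℝ proj y := fun y hy =>
    (hproj.contDiffAt (hU.mem_nhds hy)).differentiableAt one_le_inf
  have dvp : ∀ y ∈ U, DifferentiableAt ℝ (fun x => v (proj x)) y := fun y hy =>
    (hvpC.contDiffAt (hU.mem_nhds hy)).differentiableAt one_le_inf
  have dAp : DifferentiableAt ℝ (fun x => A (proj x)) p :=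
    (hApC.contDiffAt hUnhds).differentiableAt one_le_inf
  have drr : ∀ y ∈ U, DifferentiableAt ℝ (fun x => x - proj x) y := fun y hy =>
    (hprojsub.contDiffAt (hU.mem_nhds hy)).differentiableAt one_le_inf
  have hrfd : ∀ y ∈ U, ∀ u, fderiv ℝ (fun x => x - proj x) y u = u - fderiv ℝ proj y u := by
    intro y hy u
    rw [fderiv_fun_sub differentiableAt_fun_id (dproj y hy), ContinuousLinearMap.sub_apply, fderiv_fun_id]
    rfl
  have hrp : p - proj p = 0 := by rw [hpp, sub_self]
  have hnsqfun : (fun x : E2' => ‖x - proj x‖^2)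
      = (fun x => (inner ℝ (x - proj x) (x - proj x) : ℝ)) :=
    funext fun x => (real_inner_self_eq_norm_sq _).symm
  -- the derivative of ‖x - proj x‖² vanishes at p
  have hfdnsq : fderiv ℝ (fun x : E2' => ‖x - proj x‖^2) p = 0 := by
    rw [hnsqfun]
    ext u
    rw [fderiv_inner_apply (𝕜 := ℝ) (drr p hpU) (drr p hpU) u]
    simp [hrp]
  refine ⟨?_, ?_, ?_⟩
  · -- value
    rw [hpp]
    simp
  · -- first derivative
    intro w
    have hd1 : DifferentiableAt ℝ (fun x => g (proj x)) p :=
      (hgpC.contDiffAt hUnhds).differentiableAt one_le_inf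
    have hd2 : DifferentiableAt ℝ (fun x => (inner ℝ (v (proj x)) (x - proj x) : ℝ)) p :=
      (hF2C.contDiffAt hUnhds).differentiableAt one_le_inf
    have hd3 : DifferentiableAt ℝ (fun x => A (proj x) * ‖x - proj x‖^2) p :=
      (hF3C.contDiffAt hUnhds).differentiableAt one_le_inf
    rw [fderiv_fun_add (hd1.fun_add hd2) hd3, ContinuousLinearMap.add_apply,
      fderiv_fun_add hd1 hd2, ContinuousLinearMap.add_apply]
    have t1 := htan p hp w
    have t2 : fderiv ℝ (fun x => (inner ℝ (v (proj x)) (x - proj x) : ℝ)) p w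
        = (inner ℝ (v p) (w - fderiv ℝ proj p w) : ℝ) := by
      rw [fderiv_inner_apply (𝕜 := ℝ) (dvp p hpU) (drr p hpU) w, hrfd p hpU w]
      simp [hrp, hpp]
    have t3 : fderiv ℝ (fun x => A (proj x) * ‖x - proj x‖^2) p w = 0 := by
      rw [fderiv_fun_mul dAp ((hnsqC.contDiffAt hUnhds).differentiableAt one_le_inf)]
      simp [hfdnsq, hrp]
    rw [t1, t2, t3, ← inner_add_right]
    simp
  · -- second derivative bound
    intro w
    have hWC : ContDiffOn ℝ ((⊤:ℕ∞)) (fun y => fderiv ℝ proj y w) U :=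
      (hproj.fderiv_of_isOpen hU (le_of_eq rfl)).clm_apply contDiffOn_const
    have hWd : DifferentiableAt ℝ (fun y => fderiv ℝ proj y w) p :=
      (hWC.contDiffAt hUnhds).differentiableAt one_le_inf
    have hVwd : DifferentiableAt ℝ (fun y => fderiv ℝ (fun x => v (proj x)) y w) p :=
      (((hvpC.fderiv_of_isOpen hU (le_of_eq rfl)).clm_apply
        contDiffOn_const).contDiffAt hUnhds).differentiableAt one_le_inf
    set Pw : E2' := fderiv ℝ proj p w with hPw
    set Q : E2' := fderiv ℝ (fun y => fderiv ℝ proj y w) p w with hQ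
    set Vw : E2' := fderiv ℝ (fun x => v (proj x)) p w with hVw
    have hdconstw : DifferentiableAt ℝ (fun y : E2' => w - fderiv ℝ proj y w) p :=
      (differentiableAt_const w).sub hWd
    have hfdconstw : fderiv ℝ (fun y : E2' => w - fderiv ℝ proj y w) p w = -Q := by
      rw [fderiv_const_sub]; rfl
    -- (c1) second derivative of ⟪proj x - p, proj x - p⟫
    have hd1 : DifferentiableAt ℝ (fun y => proj y - p) p := (dproj p hpU).sub_const _
    have c1 : D2r (fun x => (inner ℝ (proj x - p) (proj x - p) : ℝ)) p w
        = 2 * (inner ℝ Pw Pw : ℝ) := by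
      have he : (fun y => fderiv ℝ (fun x => (inner ℝ (proj x - p) (proj x - p) : ℝ)) y w)
          =ᶠ[nhds p] (fun y => (inner ℝ (proj y - p) (fderiv ℝ proj y w) : ℝ)
            + (inner ℝ (fderiv ℝ proj y w) (proj y - p) : ℝ)) := by
        filter_upwards [hUnhds] with y hy
        have hd : DifferentiableAt ℝ (fun x => proj x - p) y := (dproj y hy).sub_const _
        rw [fderiv_inner_apply (𝕜 := ℝ) hd hd w, fderiv_sub_const]
      rw [D2r, he.fderiv_eq, fderiv_fun_add (hd1.inner ℝ hWd) (hWd.inner ℝ hd1),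
        ContinuousLinearMap.add_apply, fderiv_inner_apply (𝕜 := ℝ) hd1 hWd w,
        fderiv_inner_apply (𝕜 := ℝ) hWd hd1 w, fderiv_sub_const]
      rw [hpp, sub_self]
      simp only [inner_zero_left, inner_zero_right, add_zero, zero_add, ← hPw]
      ring
    -- (c2) second derivative of ⟪v p, proj x - p⟫
    have c2 : D2r (fun x => (inner ℝ (v p) (proj x - p) : ℝ)) p w = (inner ℝ (v p) Q : ℝ) := by
      have he : (fun y => fderiv ℝ (fun x => (inner ℝ (v p) (proj x - p) : ℝ)) y w)
          =ᶠ[nhds p] (fun y => (inner ℝ (v p) (fderiv ℝ proj y w) : ℝ)) := by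
        filter_upwards [hUnhds] with y hy
        have hd : DifferentiableAt ℝ (fun x => proj x - p) y := (dproj y hy).sub_const _
        rw [fderiv_inner_apply (𝕜 := ℝ) (differentiableAt_const (v p)) hd w, fderiv_sub_const]
        simp
      rw [D2r, he.fderiv_eq,
        fderiv_inner_apply (𝕜 := ℝ) (differentiableAt_const (v p)) hWd w]
      simp [← hQ]
    -- (c3) second derivative of ⟪x - proj x, x - proj x⟫
    have c3 : D2r (fun x => (inner ℝ (x - proj x) (x - proj x) : ℝ)) p w
        = 2 * (inner ℝ (w - Pw) (w - Pw) : ℝ) := by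
      have he : (fun y => fderiv ℝ (fun x => (inner ℝ (x - proj x) (x - proj x) : ℝ)) y w)
          =ᶠ[nhds p] (fun y => (inner ℝ (y - proj y) (w - fderiv ℝ proj y w) : ℝ)
            + (inner ℝ (w - fderiv ℝ proj y w) (y - proj y) : ℝ)) := by
        filter_upwards [hUnhds] with y hy
        rw [fderiv_inner_apply (𝕜 := ℝ) (drr y hy) (drr y hy) w, hrfd y hy w]
      rw [D2r, he.fderiv_eq, fderiv_fun_add ((drr p hpU).inner ℝ hdconstw)
          (hdconstw.inner ℝ (drr p hpU)),
        ContinuousLinearMap.add_apply, fderiv_inner_apply (𝕜 := ℝ) (drr p hpU) hdconstw w,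
        fderiv_inner_apply (𝕜 := ℝ) hdconstw (drr p hpU) w, hrfd p hpU w]
      rw [hrp]
      simp only [inner_zero_left, inner_zero_right, add_zero, zero_add, ← hPw]
      ring
    -- (c4) second derivative of ⟪v (proj x), x - proj x⟫
    have c4 : D2r (fun x => (inner ℝ (v (proj x)) (x - proj x) : ℝ)) p w
        = 2 * (inner ℝ Vw (w - Pw) : ℝ) - (inner ℝ (v p) Q : ℝ) := by
      have he : (fun y => fderiv ℝ (fun x => (inner ℝ (v (proj x)) (x - proj x) : ℝ)) y w)
          =ᶠ[nhds p] (fun y => (inner ℝ (v (proj y)) (w - fderiv ℝ proj y w) : ℝ)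
            + (inner ℝ (fderiv ℝ (fun x => v (proj x)) y w) (y - proj y) : ℝ)) := by
        filter_upwards [hUnhds] with y hy
        rw [fderiv_inner_apply (𝕜 := ℝ) (dvp y hy) (drr y hy) w, hrfd y hy w]
      rw [D2r, he.fderiv_eq, fderiv_fun_add ((dvp p hpU).inner ℝ hdconstw)
          (hVwd.inner ℝ (drr p hpU)),
        ContinuousLinearMap.add_apply, fderiv_inner_apply (𝕜 := ℝ) (dvp p hpU) hdconstw w,
        fderiv_inner_apply (𝕜 := ℝ) hVwd (drr p hpU) w, hrfd p hpU w, hfdconstw]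
      rw [hrp, hpp]
      simp only [inner_zero_left, inner_zero_right, add_zero, zero_add, ← hPw, ← hVw,
        inner_neg_right]
      ring
    -- Vw = (fderiv v p) Pw
    have hVweq : Vw = fderiv ℝ v p Pw := by
      have hcomp : fderiv ℝ (fun x => v (proj x)) p
          = (fderiv ℝ v (proj p)).comp (fderiv ℝ proj p) := by
        have hdvp : DifferentiableAt ℝ v (proj p) := by
          rw [hpp]
          exact (hv.contDiffAt hUnhds).differentiableAt one_le_inf
        exact fderiv_comp (x := p) hdvp (dproj p hpU)
      rw [hVw, hcomp, hpp]
      rfl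
    -- (c6) second derivative of A(proj x) * ‖x - proj x‖²
    have hd2nsq : D2r (fun x => ‖x - proj x‖^2) p w = 2 * (inner ℝ (w - Pw) (w - Pw) : ℝ) := by
      rw [hnsqfun]; exact c3
    have c6 : D2r (fun x => A (proj x) * ‖x - proj x‖^2) p w
        = A p * (2 * (inner ℝ (w - Pw) (w - Pw) : ℝ)) := by
      have h := d2r_mul (C2 hApC) (C2 hnsqC) w
      rw [h, hd2nsq, hfdnsq]
      rw [hrp]
      simp [hpp]
    -- (c8) separation inequality: second derivative test
    set R : E2' → ℝ := fun x => g (proj x) + ((-1) * (inner ℝ (v p) (proj x - p) : ℝ)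
      + ((-γ) * (inner ℝ (proj x - p) (proj x - p) : ℝ) + (- g p))) with hRdef
    have hLC : ContDiffOn ℝ ((⊤:ℕ∞)) (fun x => (inner ℝ (v p) (proj x - p) : ℝ)) U :=
      contDiffOn_const.inner ℝ (hproj.sub contDiffOn_const)
    have hq2C : ContDiffOn ℝ ((⊤:ℕ∞)) (fun x => (inner ℝ (proj x - p) (proj x - p) : ℝ)) U :=
      (hproj.sub contDiffOn_const).inner ℝ (hproj.sub contDiffOn_const)
    have hcm1 : ContDiffAt ℝ 2 (fun x => (-1:ℝ) * (inner ℝ (v p) (proj x - p) : ℝ)) p :=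
      contDiffAt_const.mul (C2 hLC)
    have hcm2 : ContDiffAt ℝ 2 (fun x => (-γ) * (inner ℝ (proj x - p) (proj x - p) : ℝ)) p :=
      contDiffAt_const.mul (C2 hq2C)
    have hRC2 : ContDiffAt ℝ 2 R p :=
      (C2 hgpC).add (hcm1.add (hcm2.add contDiffAt_const))
    have hRp : R p = 0 := by
      simp only [hRdef, hpp, sub_self, inner_zero_right]
      ring
    have hRmin : ∀ᶠ y in nhds p, R p ≤ R y := by
      filter_upwards [hUnhds] with y hy
      have hsep' := hsep p hp (proj y) (hprojmem y hy)
      have hin : (inner ℝ (proj y - p) (proj y - p) : ℝ) = ‖proj y - p‖^2 :=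
        real_inner_self_eq_norm_sq _
      rw [hRp]
      simp only [hRdef]
      rw [hin]
      linarith
    have hRnonneg : 0 ≤ D2r R p w := d2r_nonneg hRC2 hRmin w
    have hRsplit : D2r R p w = D2r (fun x => g (proj x)) p w
        + ((-1) * (inner ℝ (v p) Q : ℝ) + ((-γ) * (2 * (inner ℝ Pw Pw : ℝ)) + 0)) := by
      have e0 : D2r R p w = D2r (fun x => g (proj x)) p w
          + D2r (fun x => ((-1) * (inner ℝ (v p) (proj x - p) : ℝ)
            + ((-γ) * (inner ℝ (proj x - p) (proj x - p) : ℝ) + (- g p)))) p w :=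
        d2r_add (C2 hgpC) (hcm1.add (hcm2.add contDiffAt_const)) w
      have e1 : D2r (fun x => ((-1) * (inner ℝ (v p) (proj x - p) : ℝ)
            + ((-γ) * (inner ℝ (proj x - p) (proj x - p) : ℝ) + (- g p)))) p w
          = (-1) * D2r (fun x => (inner ℝ (v p) (proj x - p) : ℝ)) p w
            + D2r (fun x => ((-γ) * (inner ℝ (proj x - p) (proj x - p) : ℝ) + (- g p))) p w := by
        rw [d2r_add hcm1 (hcm2.add contDiffAt_const) w,
          d2r_const_mul (C2 hLC) (-1) w]
      have e2 : D2r (fun x => ((-γ) * (inner ℝ (proj x - p) (proj x - p) : ℝ) + (- g p))) p w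
          = (-γ) * D2r (fun x => (inner ℝ (proj x - p) (proj x - p) : ℝ)) p w + 0 := by
        rw [d2r_add hcm2 contDiffAt_const w,
          d2r_const_mul (C2 hq2C) (-γ) w, d2r_const]
      rw [e0, e1, e2, c1, c2]
    -- split the big function
    have hsplit : D2r (fun x => g (proj x) + (inner ℝ (v (proj x)) (x - proj x) : ℝ)
          + A (proj x) * ‖x - proj x‖ ^ 2) p w
        = D2r (fun x => g (proj x)) p w
          + D2r (fun x => (inner ℝ (v (proj x)) (x - proj x) : ℝ)) p w
          + D2r (fun x => A (proj x) * ‖x - proj x‖ ^ 2) p w := by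
      have e0 : D2r (fun x => g (proj x) + (inner ℝ (v (proj x)) (x - proj x) : ℝ)
            + A (proj x) * ‖x - proj x‖ ^ 2) p w
          = D2r (fun x => g (proj x) + (inner ℝ (v (proj x)) (x - proj x) : ℝ)) p w
            + D2r (fun x => A (proj x) * ‖x - proj x‖ ^ 2) p w :=
        d2r_add ((C2 hgpC).add (C2 hF2C)) (C2 hF3C) w
      rw [e0, d2r_add (C2 hgpC) (C2 hF2C) w]
    -- norms and bounds
    have hbnd : |(inner ℝ Vw (w - Pw) : ℝ)| ≤ M p * ‖Pw‖ * ‖w - Pw‖ := by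
      calc |(inner ℝ Vw (w - Pw) : ℝ)| ≤ ‖Vw‖ * ‖w - Pw‖ := abs_real_inner_le_norm _ _
        _ ≤ (M p * ‖Pw‖) * ‖w - Pw‖ := by
            apply mul_le_mul_of_nonneg_right _ (norm_nonneg _)
            rw [hVweq]
            exact clm_bound (fderiv ℝ v p) Pw
        _ = M p * ‖Pw‖ * ‖w - Pw‖ := by ring
    have hPwin : (inner ℝ Pw Pw : ℝ) = ‖Pw‖^2 := real_inner_self_eq_norm_sq _
    have hwPwin : (inner ℝ (w - Pw) (w - Pw) : ℝ) = ‖w - Pw‖^2 := real_inner_self_eq_norm_sq _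
    have hwle : ‖w‖ ≤ ‖Pw‖ + ‖w - Pw‖ := by
      calc ‖w‖ = ‖Pw + (w - Pw)‖ := by rw [add_sub_cancel]
        _ ≤ ‖Pw‖ + ‖w - Pw‖ := norm_add_le _ _
    have hApval : A p * (4*γ) = (2 * M p + 3*γ)^2 + 3*γ^2 + 4*γ := by
      simp only [hAdef]
      field_simp
    -- assemble
    rw [hsplit, c4, c6]
    have hF1ge : (inner ℝ (v p) Q : ℝ) + 2*γ*(inner ℝ Pw Pw : ℝ)
        ≤ D2r (fun x => g (proj x)) p w := by
      rw [hRsplit] at hRnonneg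
      linarith
    have habs := abs_le.mp hbnd
    have hkey := quadbound γ ‖Pw‖ ‖w - Pw‖ (M p) (A p) ‖w‖
      (inner ℝ Vw (w - Pw) : ℝ) hγ (norm_nonneg _) (norm_nonneg _) (hM1 p)
      (norm_nonneg _) hwle habs.1 hApval
    rw [hwPwin]
    rw [hPwin] at hF1ge
    linarith [hF1ge, hkey]
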